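/- If (μ,Σ) is a critical point of L (ν > 1), i.e. ∑_i w_i (x_i-μ)/(ν+δ_i) = 0 and Σ = (d+ν)∑_i w_i (x_i-μ)(x_i-μ)^T/(ν+δ_i), then the lifted matrix A = [[Σ+μμ^T, μ],[μ^T,1]] satisfies the (d+1)-dimensional critical point equation A = (d+ν)∑_i w_i z_i z_i^T/(ν-1 + z_i^T A^{-1} z_i) with z_i = (x_i^T,1)^T. -/

import Mathlib

open Real Matrix Finset

lemma trace_mul_vecMulVec {d : ℕ} (M : Matrix (Fin d) (Fin d) ℝ) (u v : Fin d → ℝ) :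
    (M * vecMulVec u v).trace = v ⬝ᵥ M *ᵥ u := by
  simp only [Matrix.trace, Matrix.mul_apply, vecMulVec_apply, dotProduct, mulVec,
    Matrix.diag, Finset.mul_sum]
  apply Finset.sum_congr rfl; intro i _; apply Finset.sum_congr rfl; intro j _; ring

/-- If `(μ,Σ)` is a critical point of `L` for `ν > 1` (the two stationarity
equations hold), then the lifted matrix `A = [[Σ+μμᵀ, μ],[μᵀ,1]]` satisfies the
`(d+1)`-dimensional critical point equation
`A = (d+ν) ∑ᵢ wᵢ zᵢzᵢᵀ/(ν-1 + zᵢᵀA⁻¹zᵢ)` with `zᵢ = (xᵢᵀ,1)ᵀ`. -/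
theorem studentT_critical_point_lifts
    (d n : ℕ) (ν : ℝ) (hν : 1 < ν)
    (x : Fin n → Fin d → ℝ)
    (w : Fin n → ℝ) (hw : ∀ i, 0 < w i) (hw1 : ∑ i, w i = 1)
    (μ : Fin d → ℝ) (Sig : Matrix (Fin d) (Fin d) ℝ) (hSig : Sig.PosDef)
    (δ : Fin n → ℝ) (hδ : ∀ i, δ i = (x i - μ) ⬝ᵥ Sig⁻¹ *ᵥ (x i - μ))
    (hcrit1 : ∑ i, (w i / (ν + δ i)) • (x i - μ) = 0)
    (hcrit2 : Sig = ((d : ℝ) + ν) • ∑ i, (w i / (ν + δ i)) •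
      Matrix.vecMulVec (x i - μ) (x i - μ))
    (A : Matrix (Fin d ⊕ Fin 1) (Fin d ⊕ Fin 1) ℝ)
    (hA : A = Matrix.fromBlocks (Sig + Matrix.vecMulVec μ μ)
      (Matrix.replicateCol (Fin 1) μ) (Matrix.replicateRow (Fin 1) μ) 1)
    (z : Fin n → (Fin d ⊕ Fin 1) → ℝ)
    (hz : ∀ i, z i = Sum.elim (x i) (fun _ => 1)) :
    A = ((d : ℝ) + ν) • ∑ i, (w i / ((ν - 1) + z i ⬝ᵥ A⁻¹ *ᵥ z i)) •
      Matrix.vecMulVec (z i) (z i) := by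
  have hδ0 : ∀ i, 0 ≤ δ i := fun i => by
    rw [hδ]; exact hSig.inv.posSemidef.dotProduct_mulVec_nonneg (x i - μ)
  have hpos : ∀ i, 0 < ν + δ i := fun i => by linarith [hδ0 i]
  set c : Fin n → ℝ := fun i => w i / (ν + δ i) with hc
  have hdet : IsUnit Sig.det := isUnit_iff_ne_zero.2 hSig.det_pos.ne'
  have hSig_inv : Sig * Sig⁻¹ = 1 := Matrix.mul_nonsing_inv _ hdet
  have hSinv_mul : Sig⁻¹ * Sig = 1 := Matrix.nonsing_inv_mul _ hdet
  -- trace identity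
  have htr : (d : ℝ) = ((d : ℝ) + ν) * ∑ i, c i * δ i := by
    calc (d : ℝ) = (Sig⁻¹ * Sig).trace := by
          rw [hSinv_mul, Matrix.trace_one, Fintype.card_fin]
      _ = ((d : ℝ) + ν) * ∑ i, c i * δ i := by
          nth_rewrite 2 [hcrit2]
          rw [Matrix.mul_smul, Matrix.trace_smul, Matrix.mul_sum, Matrix.trace_sum, smul_eq_mul]
          congr 1
          apply Finset.sum_congr rfl; intro i _
          rw [Matrix.mul_smul, Matrix.trace_smul, trace_mul_vecMulVec, ← hδ, smul_eq_mul]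
  -- normalization identity
  have hE3 : ((d : ℝ) + ν) * ∑ i, c i = 1 := by
    have hsum : ν * (∑ i, c i) + ∑ i, c i * δ i = 1 := by
      rw [← hw1, Finset.mul_sum, ← Finset.sum_add_distrib]
      apply Finset.sum_congr rfl
      intro i _
      have : c i * (ν + δ i) = w i := div_mul_cancel₀ _ (hpos i).ne'
      nlinarith [this]
    have hν0 : (ν : ℝ) ≠ 0 := by linarith
    have h2 : ν * (((d : ℝ) + ν) * ∑ i, c i) = ν * 1 := by nlinarith [htr, hsum]
    exact mul_left_cancel₀ hν0 h2
  -- the inverse of A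
  set B : Matrix (Fin d ⊕ Fin 1) (Fin d ⊕ Fin 1) ℝ :=
    Matrix.fromBlocks Sig⁻¹ (-(Sig⁻¹ * Matrix.replicateCol (Fin 1) μ))
      (-(Matrix.replicateRow (Fin 1) μ * Sig⁻¹))
      (1 + Matrix.replicateRow (Fin 1) μ * Sig⁻¹ * Matrix.replicateCol (Fin 1) μ) with hB
  have hSX : ∀ X : Matrix (Fin d) (Fin 1) ℝ, Sig * (Sig⁻¹ * X) = X := by
    intro X; rw [← Matrix.mul_assoc, hSig_inv, Matrix.one_mul]
  have hAB : A * B = 1 := by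
    rw [hA, hB, Matrix.vecMulVec_eq (Fin 1), ← Matrix.fromBlocks_one,
      Matrix.fromBlocks_multiply, Matrix.fromBlocks_inj]
    rw [show (Unique.fintype : Fintype (Fin 1)) = Fin.fintype 1 from Subsingleton.elim _ _]
    refine ⟨?_, ?_, ?_, ?_⟩
    · simp only [Matrix.add_mul, Matrix.mul_neg, Matrix.mul_assoc, hSig_inv]
      abel
    · simp only [Matrix.mul_neg, Matrix.add_mul, Matrix.mul_add, Matrix.mul_one,
        Matrix.mul_assoc, hSX]
      abel
    · simp only [Matrix.one_mul]
      abel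
    · simp only [Matrix.mul_neg, Matrix.one_mul, Matrix.mul_assoc]
      abel
  have hAinv : A⁻¹ = B := Matrix.inv_eq_right_inv hAB
  -- the quadratic form
  have hcol : Matrix.replicateCol (Fin 1) μ *ᵥ (fun _ => (1:ℝ)) = μ := by
    ext j; simp [Matrix.mulVec, Matrix.replicateCol_apply, dotProduct]
  have hrowv : ∀ v : Fin d → ℝ, Matrix.replicateRow (Fin 1) μ *ᵥ v = fun _ => μ ⬝ᵥ v := by
    intro v; ext j; simp [Matrix.mulVec, Matrix.replicateRow_apply, dotProduct]
  have hdot1 : ∀ v : Fin 1 → ℝ, (fun _ : Fin 1 => (1:ℝ)) ⬝ᵥ v = v 0 := by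
    intro v; simp [dotProduct]
  have hδ' : ∀ i, (x i - μ) ⬝ᵥ Sig⁻¹ *ᵥ (x i - μ)
      = x i ⬝ᵥ Sig⁻¹ *ᵥ x i - x i ⬝ᵥ Sig⁻¹ *ᵥ μ - μ ⬝ᵥ Sig⁻¹ *ᵥ x i + μ ⬝ᵥ Sig⁻¹ *ᵥ μ := by
    intro i
    rw [Matrix.mulVec_sub, dotProduct_sub, sub_dotProduct, sub_dotProduct]
    ring
  have hq : ∀ i, z i ⬝ᵥ A⁻¹ *ᵥ z i = δ i + 1 := by
    intro i
    rw [hAinv, hz, hδ, hδ', hB, Matrix.fromBlocks_mulVec]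
    simp only [Sum.elim_comp_inl, Sum.elim_comp_inr, sumElim_dotProduct_sumElim,
      Matrix.neg_mulVec, ← Matrix.mulVec_mulVec, hcol, Matrix.add_mulVec, Matrix.one_mulVec,
      hrowv, dotProduct_add, dotProduct_neg, hdot1, Pi.add_apply, Pi.neg_apply]
    ring
  -- pointwise scalar identities
  have hE1 : ∀ j, ∑ i, c i * (x i j - μ j) = 0 := by
    intro j
    have := congrFun hcrit1 j
    simpa [Finset.sum_apply] using this
  have hE2 : ∀ j k, Sig j k = ((d : ℝ) + ν) * ∑ i, c i * ((x i j - μ j) * (x i k - μ k)) := by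
    intro j k
    have := congrFun (congrFun hcrit2 j) k
    simpa [Matrix.sum_apply, Finset.mul_sum, mul_assoc, Matrix.vecMulVec_apply] using this
  -- assemble
  have hgoal : ∀ p q, A p q = (((d : ℝ) + ν) • ∑ i, c i • Matrix.vecMulVec (z i) (z i)) p q := by
    intro p q
    have hrhs : (((d : ℝ) + ν) • ∑ i, c i • Matrix.vecMulVec (z i) (z i)) p q
        = ((d : ℝ) + ν) * ∑ i, c i * (z i p * z i q) := by
      simp [Matrix.sum_apply, Finset.mul_sum, mul_assoc, Matrix.vecMulVec_apply]
    rw [hrhs, hA]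
    cases p with
    | inl j =>
      cases q with
      | inl k =>
        simp only [Matrix.fromBlocks_apply₁₁, Matrix.add_apply, vecMulVec_apply]
        have hexp : ∑ i, c i * (z i (Sum.inl j) * z i (Sum.inl k))
            = ∑ i, (c i * ((x i j - μ j) * (x i k - μ k)) + μ j * (c i * (x i k - μ k))
              + μ k * (c i * (x i j - μ j)) + μ j * μ k * c i) := by
          apply Finset.sum_congr rfl; intro i _; rw [hz]; simp; ring
        rw [hexp]
        simp only [Finset.sum_add_distrib, ← Finset.mul_sum, hE1, mul_zero]
        rw [hE2 j k]
        linear_combination (-(μ j * μ k)) * hE3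
      | inr k =>
        simp only [Matrix.fromBlocks_apply₁₂, Matrix.replicateCol_apply]
        have hexp : ∑ i, c i * (z i (Sum.inl j) * z i (Sum.inr k))
            = ∑ i, (c i * (x i j - μ j) + μ j * c i) := by
          apply Finset.sum_congr rfl; intro i _; rw [hz]; simp; ring
        rw [hexp]
        simp only [Finset.sum_add_distrib, ← Finset.mul_sum, hE1]
        linear_combination (-(μ j)) * hE3
    | inr j =>
      cases q with
      | inl k =>
        simp only [Matrix.fromBlocks_apply₂₁, Matrix.replicateRow_apply]
        have hexp : ∑ i, c i * (z i (Sum.inr j) * z i (Sum.inl k))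
            = ∑ i, (c i * (x i k - μ k) + μ k * c i) := by
          apply Finset.sum_congr rfl; intro i _; rw [hz]; simp; ring
        rw [hexp]
        simp only [Finset.sum_add_distrib, ← Finset.mul_sum, hE1]
        linear_combination (-(μ k)) * hE3
      | inr k =>
        simp only [Matrix.fromBlocks_apply₂₂, Matrix.one_apply]
        have hexp : ∑ i, c i * (z i (Sum.inr j) * z i (Sum.inr k)) = ∑ i, c i := by
          apply Finset.sum_congr rfl; intro i _; rw [hz]; simp
        rw [hexp]
        have hjk : j = k := Subsingleton.elim j k
        subst hjk
        rw [if_pos rfl]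
        linarith [hE3]
    done
  have hsimp : ∀ i, (ν - 1) + z i ⬝ᵥ A⁻¹ *ᵥ z i = ν + δ i := by
    intro i; rw [hq i]; ring
  simp only [hsimp]
  ext p q
  exact hgoal p q
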